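/- Let k be a commutative ring, M, N k-modules, and m ≥ 1. The k-linear map τ : (M ⊗ N)^{⊗m} → (N ⊗ M)^{⊗m} obtained by rewriting M⊗N⊗M⊗N⊗...⊗M⊗N as M⊗(N⊗...⊗N) and cyclically moving the first M factor to the end is an isomorphism of k-modules, and it is C_m-equivariant for the cyclic permutation actions on both sides. -/

import Mathlib

open scoped TensorProduct
open PiTensorProduct

section Aux

variable (k : Type*) [CommRing k] (A B : Type*)
  [AddCommGroup A] [Module k A] [AddCommGroup B] [Module k B]

/-- cons-equivalence for constant-family PiTensorProduct over `Fin (n+1)`. -/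
noncomputable def myConsEquiv (n : ℕ) :
    (A ⊗[k] (⨂[k] _ : Fin n, A)) ≃ₗ[k] (⨂[k] _ : Fin (n+1), A) :=
  (TensorProduct.congr (PiTensorProduct.subsingletonEquiv (R := k) (0 : Fin 1)).symm
      (LinearEquiv.refl k _)).trans <|
    (PiTensorProduct.tmulEquiv k A).trans <|
      PiTensorProduct.reindex k (fun _ : Fin 1 ⊕ Fin n => A)
        (finSumFinEquiv.trans (finCongr (Nat.add_comm 1 n)))

theorem myConsEquiv_tmul (n : ℕ) (x : A) (f : Fin n → A) :
    myConsEquiv k A n (x ⊗ₜ[k] (⨂ₜ[k] i, f i)) = PiTensorProduct.tprod k (Fin.cons x f) := by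
  have h1 : (PiTensorProduct.subsingletonEquiv (R := k) (0 : Fin 1)).symm x
      = ⨂ₜ[k] _ : Fin 1, x := PiTensorProduct.subsingletonEquiv_symm_apply' (0 : Fin 1) x
  simp only [myConsEquiv, LinearEquiv.trans_apply, TensorProduct.congr_tmul,
    LinearEquiv.refl_apply, h1, PiTensorProduct.tmulEquiv_apply,
    PiTensorProduct.reindex_tprod]
  congr 1
  funext j
  set e : Fin 1 ⊕ Fin n ≃ Fin (n+1) := finSumFinEquiv.trans (finCongr (Nat.add_comm 1 n))
  induction j using Fin.cases with
  | zero =>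
    have : e.symm 0 = Sum.inl 0 := by
      rw [Equiv.symm_apply_eq]
      ext
      simp [e]
    show Sum.elim (fun _ => x) f (e.symm 0) = _
    rw [this]; rfl
  | succ i =>
    have : e.symm i.succ = Sum.inr i := by
      rw [Equiv.symm_apply_eq]
      ext
      simp [e, Nat.add_comm 1 i]
    show Sum.elim (fun _ => x) f (e.symm i.succ) = _
    rw [this]; simp

/-- The splitting equivalence `⨂ᵢ (A ⊗ B) ≃ (⨂ᵢ A) ⊗ (⨂ᵢ B)`. -/
noncomputable def mySplit : (n : ℕ) →
    (⨂[k] _ : Fin n, (A ⊗[k] B)) ≃ₗ[k] ((⨂[k] _ : Fin n, A) ⊗[k] (⨂[k] _ : Fin n, B))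
  | 0 =>
    (PiTensorProduct.isEmptyEquiv (Fin 0)).trans <|
      (TensorProduct.lid k k).symm.trans <|
        TensorProduct.congr (PiTensorProduct.isEmptyEquiv (Fin 0)).symm
          (PiTensorProduct.isEmptyEquiv (Fin 0)).symm
  | (n+1) =>
    (myConsEquiv k (A ⊗[k] B) n).symm.trans <|
      (TensorProduct.congr (LinearEquiv.refl k (A ⊗[k] B)) (mySplit n)).trans <|
        (TensorProduct.tensorTensorTensorComm k A B _ _).trans <|
          TensorProduct.congr (myConsEquiv k A n) (myConsEquiv k B n)

theorem mySplit_tprod : ∀ (n : ℕ) (a : Fin n → A) (b : Fin n → B),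
    mySplit k A B n (⨂ₜ[k] i, (a i ⊗ₜ[k] b i)) = (⨂ₜ[k] i, a i) ⊗ₜ[k] (⨂ₜ[k] i, b i)
  | 0, a, b => by
    have ha : (⨂ₜ[k] i : Fin 0, a i)
        = (PiTensorProduct.isEmptyEquiv (Fin 0)).symm (1 : k) := by
      rw [LinearEquiv.eq_symm_apply, PiTensorProduct.isEmptyEquiv_apply_tprod]
    have hb : (⨂ₜ[k] i : Fin 0, b i)
        = (PiTensorProduct.isEmptyEquiv (Fin 0)).symm (1 : k) := by
      rw [LinearEquiv.eq_symm_apply, PiTensorProduct.isEmptyEquiv_apply_tprod]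
    simp [mySplit, TensorProduct.lid, ha, hb]
  | (n+1), a, b => by
    have hsymm : (myConsEquiv k (A ⊗[k] B) n).symm (⨂ₜ[k] i, (a i ⊗ₜ[k] b i))
        = (a 0 ⊗ₜ[k] b 0) ⊗ₜ[k] (⨂ₜ[k] i : Fin n, (a i.succ ⊗ₜ[k] b i.succ)) := by
      rw [LinearEquiv.symm_apply_eq, myConsEquiv_tmul]
      exact congrArg _ (Fin.cons_self_tail fun i => a i ⊗ₜ[k] b i).symm
    simp only [mySplit, LinearEquiv.trans_apply, hsymm,
      TensorProduct.congr_tmul, LinearEquiv.refl_apply,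
      mySplit_tprod n (fun i => a i.succ) (fun i => b i.succ),
      TensorProduct.tensorTensorTensorComm_tmul, myConsEquiv_tmul,
      show Fin.cons (a 0) (fun i => a i.succ) = a from Fin.cons_self_tail a,
      show Fin.cons (b 0) (fun i => b i.succ) = b from Fin.cons_self_tail b]

/-- pure pair tensors span. -/
theorem span_pure (m : ℕ) :
    Submodule.span k {y : ⨂[k] _ : Fin m, (A ⊗[k] B) |
      ∃ (a : Fin m → A) (b : Fin m → B), y = ⨂ₜ[k] i, (a i ⊗ₜ[k] b i)} = ⊤ := by
  rw [Submodule.eq_top_iff']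
  intro x
  set W := Submodule.span k {y : ⨂[k] _ : Fin m, (A ⊗[k] B) |
      ∃ (a : Fin m → A) (b : Fin m → B), y = ⨂ₜ[k] i, (a i ⊗ₜ[k] b i)}
  refine PiTensorProduct.induction_on' x (fun r f => ?_)
    (fun u v hu hv => W.add_mem hu hv)
  rw [PiTensorProduct.tprodCoeff_eq_smul_tprod]
  refine W.smul_mem r ?_
  have key : ∀ (S : Finset (Fin m)) (f : Fin m → A ⊗[k] B),
      (∀ i ∉ S, ∃ x y, f i = x ⊗ₜ[k] y) → PiTensorProduct.tprod k f ∈ W := by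
    intro S
    induction S using Finset.induction_on with
    | empty =>
      intro f hf
      choose a b hab using fun i => hf i (Finset.notMem_empty i)
      refine Submodule.subset_span ⟨a, b, ?_⟩
      congr 1
      funext i
      exact hab i
    | @insert j S hj ih =>
      intro f hf
      have main : ∀ z : A ⊗[k] B,
          PiTensorProduct.tprod k (Function.update f j z) ∈ W := by
        intro z
        induction z using TensorProduct.induction_on with
        | zero =>
          rw [MultilinearMap.map_update_zero]
          exact W.zero_mem
        | tmul x y =>
          refine ih _ ?_
          intro i hi
          by_cases h : i = j
          · subst h; simp
          · rw [Function.update_of_ne h]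
            exact hf i (by simp [h, hi])
        | add u v hu hv =>
          rw [MultilinearMap.map_update_add]
          exact W.add_mem hu hv
      have := main (f j)
      rwa [Function.update_eq_self] at this
  refine key Finset.univ f (fun i hi => absurd (Finset.mem_univ i) hi)

end Aux

/-- for `k`-modules `M, N` and `m ≥ 1`, the rotation map
`τ : (M ⊗ N)^{⊗m} → (N ⊗ M)^{⊗m}`,
`(m_1⊗n_1)⊗⋯⊗(m_m⊗n_m) ↦ (n_1⊗m_2)⊗(n_2⊗m_3)⊗⋯⊗(n_m⊗m_1)`,
is a `k`-linear isomorphism and is equivariant for the cyclic permutation `C_m`-actions on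
the tensor factors of both sides. -/
theorem rotation_iso_equivariant (k : Type*) [CommRing k] (M N : Type*)
    [AddCommGroup M] [Module k M] [AddCommGroup N] [Module k N] (m : ℕ) (hm : 1 ≤ m) :
    ∃ τ : (⨂[k] _i : Fin m, (M ⊗[k] N)) ≃ₗ[k] (⨂[k] _i : Fin m, (N ⊗[k] M)),
      (∀ (a : Fin m → M) (b : Fin m → N),
        τ (⨂ₜ[k] i, (a i ⊗ₜ[k] b i)) = ⨂ₜ[k] i, (b i ⊗ₜ[k] a (finRotate m i))) ∧
      (∀ x : ⨂[k] _i : Fin m, (M ⊗[k] N),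
        τ ((PiTensorProduct.reindex k (fun _ : Fin m => (M ⊗[k] N)) (finRotate m)) x)
          = (PiTensorProduct.reindex k (fun _ : Fin m => (N ⊗[k] M)) (finRotate m)) (τ x)) := by
  set τ : (⨂[k] _i : Fin m, (M ⊗[k] N)) ≃ₗ[k] (⨂[k] _i : Fin m, (N ⊗[k] M)) :=
    (mySplit k M N m).trans <|
      (TensorProduct.congr
        (PiTensorProduct.reindex k (fun _ : Fin m => M) (finRotate m).symm)
        (LinearEquiv.refl k _)).trans <|
      (TensorProduct.comm k _ _).trans (mySplit k N M m).symm with hτ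
  have hpure : ∀ (a : Fin m → M) (b : Fin m → N),
      τ (⨂ₜ[k] i, (a i ⊗ₜ[k] b i)) = ⨂ₜ[k] i, (b i ⊗ₜ[k] a (finRotate m i)) := by
    intro a b
    rw [hτ]
    simp only [LinearEquiv.trans_apply, mySplit_tprod, TensorProduct.congr_tmul,
      LinearEquiv.refl_apply, PiTensorProduct.reindex_tprod, TensorProduct.comm_tmul,
      LinearEquiv.symm_apply_eq, mySplit_tprod, Equiv.symm_symm]
  refine ⟨τ, hpure, ?_⟩
  have key : τ.toLinearMap ∘ₗ
        (PiTensorProduct.reindex k (fun _ : Fin m => (M ⊗[k] N)) (finRotate m)).toLinearMap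
      = (PiTensorProduct.reindex k (fun _ : Fin m => (N ⊗[k] M)) (finRotate m)).toLinearMap ∘ₗ
        τ.toLinearMap := by
    refine LinearMap.ext_on (span_pure k M N m) ?_
    rintro y ⟨a, b, rfl⟩
    simp only [LinearMap.coe_comp, Function.comp_apply, LinearEquiv.coe_coe,
      PiTensorProduct.reindex_tprod, hpure]
    haveI : NeZero m := ⟨by omega⟩
    simp [Equiv.symm_apply_apply, Equiv.apply_symm_apply, sub_add_cancel, add_sub_cancel_right]
  intro x
  exact LinearMap.congr_fun key x
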